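/- Let p ≥ 1 be a real number and define ξ : [0,1] → ℝ by ξ(t) = (1/p)·(1 − (1−t)^p). Then ξ(0) = 0, ξ(t) ∈ [0,1] for every t ∈ [0,1], and for every t ∈ [0,1]: ∫_0^t ( p·ξ(s) − (1 − ξ(s)) ) ds + (1−t)·ξ(t) = 0. -/

import Mathlib

/-- for a real `p ≥ 1`, the function `ξ(t) = (1/p)(1 − (1−t)^p)` (real
exponentiation) satisfies `ξ(0) = 0`, `ξ(t) ∈ [0,1]` for `t ∈ [0,1]`, and the
continuous-time approachability identity
`∫_0^t (p·ξ(s) − (1 − ξ(s))) ds + (1−t)·ξ(t) = 0` for every `t ∈ [0,1]`. -/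
theorem xi_solves_continuous_time_equation (p : ℝ) (hp : 1 ≤ p) (ξ : ℝ → ℝ)
    (hξ : ∀ t : ℝ, ξ t = (1 / p) * (1 - (1 - t) ^ p)) :
    ξ 0 = 0 ∧ (∀ t ∈ Set.Icc (0:ℝ) 1, ξ t ∈ Set.Icc (0:ℝ) 1) ∧
    ∀ t ∈ Set.Icc (0:ℝ) 1,
      (∫ s in (0:ℝ)..t, (p * ξ s - (1 - ξ s))) + (1 - t) * ξ t = 0 := by
  have hp0 : 0 < p := lt_of_lt_of_le one_pos hp
  refine ⟨by simp [hξ], ?_, ?_⟩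
  · intro t ht
    obtain ⟨h0, h1⟩ := ht
    have hb0 : 0 ≤ 1 - t := by linarith
    have hb1 : 1 - t ≤ 1 := by linarith
    have h1' : (1 - t) ^ p ≤ 1 := Real.rpow_le_one hb0 hb1 hp0.le
    have h0' : 0 ≤ (1 - t) ^ p := Real.rpow_nonneg hb0 p
    rw [hξ]
    constructor
    · exact mul_nonneg (by positivity) (by linarith)
    · exact mul_le_one₀ (by rw [div_le_one hp0]; exact hp) (by linarith) (by linarith)
  · intro t ht
    obtain ⟨h0, h1⟩ := ht
    have hc : Continuous fun x : ℝ => x ^ p := continuous_iff_continuousAt.2 fun x =>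
      Real.continuousAt_rpow_const x p (Or.inr hp0.le)
    have hcont : Continuous (fun s : ℝ => (1 - s) ^ p) :=
      hc.comp (continuous_const.sub continuous_id)
    have hint : IntervalIntegrable (fun s : ℝ => (1 - s) ^ p)
        MeasureTheory.volume 0 t := hcont.intervalIntegrable 0 t
    have hI : (∫ s in (0:ℝ)..t, (1 - s) ^ p) = (1 - (1 - t) ^ (p + 1)) / (p + 1) := by
      have h := intervalIntegral.integral_comp_sub_left (a := 0) (b := t)
        (fun x : ℝ => x ^ p) 1
      rw [h, integral_rpow (Or.inl (by linarith))]
      norm_num [Real.one_rpow]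
    have heq : (∫ s in (0:ℝ)..t, (p * ξ s - (1 - ξ s)))
        = ∫ s in (0:ℝ)..t, ((1 / p) - (1 + 1 / p) * (1 - s) ^ p) := by
      apply intervalIntegral.integral_congr
      intro s _
      simp only [hξ]
      field_simp
      ring
    rw [heq, intervalIntegral.integral_sub (intervalIntegrable_const)
      (hint.const_mul _), intervalIntegral.integral_const_mul, hI,
      intervalIntegral.integral_const, hξ]
    have hmul : (1 - t) ^ (p + 1) = (1 - t) ^ p * (1 - t) := by
      rcases eq_or_ne (1 - t) 0 with h | h
      · rw [h, Real.zero_rpow (by positivity), Real.zero_rpow (by positivity), zero_mul]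
      · exact Real.rpow_add_one h p
    rw [hmul]
    have hp1 : p + 1 ≠ 0 := by positivity
    field_simp
    ring_nf
    rw [mul_inv_cancel₀ hp0.ne']
    ring
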